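/- arXiv:1412.7556 — 3 statements merged into one kernel-verified Lean document; each statement's English description precedes it below -/
import Mathlib

section
/- Let g_n : [0,t] → ℝ^{N+1} be measurable functions with |g_n(s)| ≤ M for all n and s, converging weakly-* in L^∞ to g, and let X_n : [0,t] → ℝ^N converge uniformly to X. Let φ : ℝ^{N+1} × ℝ^N × ℝ → ℝ be continuous, nonnegative, Lipschitz, and convex in its first argument. If ∫₀^t φ(g_n(s), X_n(s), t−s) ds → 0, then ∫₀^t φ(g(s), X(s), t−s) ds = 0. -/
open MeasureTheory
open scoped RealInnerProductSpace

theorem exists_subgradient' {d : ℕ} (L : NNReal) (f : EuclideanSpace ℝ (Fin d) → ℝ)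
    (hconv : ConvexOn ℝ Set.univ f) (hlip : LipschitzWith L f)
    (w : EuclideanSpace ℝ (Fin d)) :
    ∃ p : EuclideanSpace ℝ (Fin d), ‖p‖ ≤ L ∧ ∀ v, f w + ⟪p, v - w⟫ ≤ f v := by
  have hfc : Continuous f := hlip.continuous
  set S : Set (EuclideanSpace ℝ (Fin d) × ℝ) := {q | f q.1 < q.2} with hS
  have hfc1 : Continuous (fun q : EuclideanSpace ℝ (Fin d) × ℝ => f q.1) :=
    hfc.comp continuous_fst
  have hSopen : IsOpen S := isOpen_lt hfc1 continuous_snd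
  have hSconv : Convex ℝ S := by
    rintro ⟨v₁, r₁⟩ h₁ ⟨v₂, r₂⟩ h₂ a b ha hb hab
    simp only [hS, Set.mem_setOf_eq] at h₁ h₂ ⊢
    have hcc := hconv.2 (Set.mem_univ v₁) (Set.mem_univ v₂) ha hb hab
    simp only [smul_eq_mul] at hcc
    simp only [Prod.smul_mk, Prod.mk_add_mk, smul_eq_mul]
    refine lt_of_le_of_lt hcc ?_
    rcases eq_or_lt_of_le ha with ha' | ha'
    · have hb1 : b = 1 := by linarith
      simp only [← ha', hb1, zero_mul, one_mul, zero_add]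
      simpa using h₂
    · rcases eq_or_lt_of_le hb with hb' | hb'
      · have ha1 : a = 1 := by linarith
        simp only [← hb', ha1, zero_mul, one_mul, add_zero]
        simpa using h₁
      · nlinarith
  have hx : (w, f w) ∉ S := by simp [hS]
  obtain ⟨ℓ, hℓ⟩ := geometric_hahn_banach_point_open hSconv hSopen hx
  set β : ℝ := ℓ (0, 1) with hβ
  have hdecomp : ∀ (v : EuclideanSpace ℝ (Fin d)) (r : ℝ), ℓ (v, r) = ℓ (v, 0) + r * β := by
    intro v r
    have h0 : (v, r) = (v, (0:ℝ)) + r • ((0:EuclideanSpace ℝ (Fin d)), (1:ℝ)) := by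
      simp [Prod.ext_iff]
    rw [h0, map_add, _root_.map_smul]
    simp [hβ, mul_comm]
  have hβpos : 0 < β := by
    have h1 : ℓ (w, f w) < ℓ (w, f w + 1) := hℓ _ (by simp [hS])
    rw [hdecomp w (f w + 1), hdecomp w (f w)] at h1
    linarith
  have hβi : 0 < β⁻¹ := inv_pos.2 hβpos
  have key : ∀ v, ℓ (w, 0) + f w * β ≤ ℓ (v, 0) + f v * β := by
    intro v
    rw [← hdecomp w (f w)]
    refine le_of_forall_pos_le_add fun ε hε => ?_
    have hmem : (v, f v + ε / β) ∈ S := by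
      simp only [hS, Set.mem_setOf_eq]
      have : 0 < ε / β := div_pos hε hβpos
      linarith
    have h2 := hℓ _ hmem
    rw [hdecomp v (f v + ε / β)] at h2
    have hh : (f v + ε / β) * β = f v * β + ε := by field_simp
    nlinarith
  set p : EuclideanSpace ℝ (Fin d) :=
    (-(β⁻¹)) • ((InnerProductSpace.toDual ℝ (EuclideanSpace ℝ (Fin d))).symm
      (ℓ.comp (ContinuousLinearMap.inl ℝ (EuclideanSpace ℝ (Fin d)) ℝ))) with hp
  have hinner : ∀ z : EuclideanSpace ℝ (Fin d), ⟪p, z⟫ = -(β⁻¹) * ℓ (z, 0) := by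
    intro z
    rw [hp, real_inner_smul_left]
    congr 1
    rw [InnerProductSpace.toDual_symm_apply]
    simp
  have hsub : ∀ v, f w + ⟪p, v - w⟫ ≤ f v := by
    intro v
    have h1 := key v
    have h2 : ⟪p, v - w⟫ = -(β⁻¹) * ℓ (v - w, 0) := hinner _
    have h3 : ℓ (v - w, 0) = ℓ (v, 0) - ℓ (w, 0) := by
      have h0 : ((v - w : EuclideanSpace ℝ (Fin d)), (0:ℝ)) = (v, (0:ℝ)) - (w, (0:ℝ)) := by
        simp [Prod.ext_iff]
      rw [h0, map_sub]
    have h5 : β⁻¹ * (ℓ (w,0) - ℓ (v,0)) ≤ β⁻¹ * ((f v - f w) * β) :=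
      mul_le_mul_of_nonneg_left (by linarith) hβi.le
    have h6 : β⁻¹ * ((f v - f w) * β) = f v - f w := by
      field_simp
    have h7 : -(β⁻¹) * (ℓ (v,0) - ℓ (w,0)) = β⁻¹ * (ℓ (w,0) - ℓ (v,0)) := by ring
    rw [h2, h3]
    linarith
  refine ⟨p, ?_, hsub⟩
  have hup : ∀ z : EuclideanSpace ℝ (Fin d), ⟪p, z⟫ ≤ L * ‖z‖ := by
    intro z
    have h1 := hsub (w + z)
    have h2 : f (w + z) - f w ≤ L * ‖z‖ := by
      have h4 := hlip.dist_le_mul (w + z) w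
      rw [Real.dist_eq] at h4
      have h3 : dist (w + z) w = ‖z‖ := by simp [dist_eq_norm]
      rw [h3] at h4
      calc f (w + z) - f w ≤ |f (w + z) - f w| := le_abs_self _
      _ ≤ L * ‖z‖ := h4
    have h4 : (w + z) - w = z := by abel
    rw [h4] at h1
    linarith
  have hpp := hup p
  rw [real_inner_self_eq_norm_sq] at hpp
  nlinarith [norm_nonneg p, L.coe_nonneg]

set_option maxHeartbeats 1000000 in
/-- If `g_n` are uniformly bounded measurable functions converging weakly-*
in `L^∞` to `g`, `X_n → X` uniformly on `[0,t]`, and `φ ≥ 0` is continuous, Lipschitz and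
convex in its first argument, then `∫ φ(g_n, X_n, t-·) → 0` implies `∫ φ(g, X, t-·) = 0`. -/
theorem stmt5 (N : ℕ) (t M : ℝ) (ht : 0 < t) (hM : 0 < M) (L : NNReal)
    (g : ℕ → ℝ → EuclideanSpace ℝ (Fin (N + 1)))
    (glim : ℝ → EuclideanSpace ℝ (Fin (N + 1)))
    (hgmeas : ∀ n, Measurable (g n)) (hglimmeas : Measurable glim)
    (hgbd : ∀ n s, ‖g n s‖ ≤ M) (hglimbd : ∀ s, ‖glim s‖ ≤ M)
    (hweak : ∀ h : ℝ → EuclideanSpace ℝ (Fin (N + 1)),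
      Integrable h (volume.restrict (Set.Icc 0 t)) →
        Filter.Tendsto (fun n => ∫ s in Set.Icc (0:ℝ) t, ⟪g n s, h s⟫)
          Filter.atTop (nhds (∫ s in Set.Icc (0:ℝ) t, ⟪glim s, h s⟫)))
    (X : ℕ → ℝ → EuclideanSpace ℝ (Fin N)) (Xlim : ℝ → EuclideanSpace ℝ (Fin N))
    (hXconv : TendstoUniformlyOn X Xlim Filter.atTop (Set.Icc 0 t))
    (hXcont : ∀ n, ContinuousOn (X n) (Set.Icc 0 t))
    (φ : EuclideanSpace ℝ (Fin (N + 1)) → EuclideanSpace ℝ (Fin N) → ℝ → ℝ)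
    (hφcont : Continuous (fun q : EuclideanSpace ℝ (Fin (N + 1)) ×
      EuclideanSpace ℝ (Fin N) × ℝ => φ q.1 q.2.1 q.2.2))
    (hφpos : ∀ v x τ, 0 ≤ φ v x τ)
    (hφlip : LipschitzWith L (fun q : EuclideanSpace ℝ (Fin (N + 1)) ×
      EuclideanSpace ℝ (Fin N) × ℝ => φ q.1 q.2.1 q.2.2))
    (hφconv : ∀ x τ, ConvexOn ℝ Set.univ (fun v => φ v x τ))
    (hlim : Filter.Tendsto (fun n => ∫ s in Set.Icc (0:ℝ) t, φ (g n s) (X n s) (t - s))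
      Filter.atTop (nhds 0)) :
    ∫ s in Set.Icc (0:ℝ) t, φ (glim s) (Xlim s) (t - s) = 0 := by
  classical
  have hμfin : IsFiniteMeasure (volume.restrict (Set.Icc (0:ℝ) t)) := by
    constructor
    rw [Measure.restrict_apply_univ]
    exact measure_Icc_lt_top
  -- Lipschitz in first variable
  have hlipv : ∀ x τ, LipschitzWith L (fun v : EuclideanSpace ℝ (Fin (N+1)) => φ v x τ) := by
    intro x τ
    refine LipschitzWith.of_dist_le_mul fun v v' => ?_
    have h := hφlip.dist_le_mul (v, (x, τ)) (v', (x, τ))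
    rwa [Prod.dist_eq, dist_self, max_eq_left dist_nonneg] at h
  -- Lipschitz in second/third variable
  have hlipG : ∀ (v : EuclideanSpace ℝ (Fin (N+1))) (x x' : EuclideanSpace ℝ (Fin N)) (τ τ' : ℝ),
      |φ v x τ - φ v x' τ'| ≤ L * dist (x, τ) (x', τ') := by
    intro v x x' τ τ'
    have h := hφlip.dist_le_mul (v, (x, τ)) (v, (x', τ'))
    rwa [Prod.dist_eq, dist_self, max_eq_right dist_nonneg, Real.dist_eq] at h
  have hXlimc : ContinuousOn Xlim (Set.Icc 0 t) :=
    hXconv.continuousOn (Filter.Eventually.of_forall hXcont).frequently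
  -- boundedness of φ along a continuous Y
  have hφbd : ∀ Y : ℝ → EuclideanSpace ℝ (Fin N), ContinuousOn Y (Set.Icc 0 t) →
      ∃ B : ℝ, ∀ (v : EuclideanSpace ℝ (Fin (N+1))) s, ‖v‖ ≤ M → s ∈ Set.Icc (0:ℝ) t →
        |φ v (Y s) (t - s)| ≤ B := by
    intro Y hY
    obtain ⟨R, hR⟩ := (isCompact_Icc.image_of_continuousOn hY).isBounded.subset_closedBall 0
    refine ⟨|φ 0 0 0| + L * (M + (|R| + t)), fun v s hv hs => ?_⟩
    have h1 := hφlip.dist_le_mul (v, (Y s, t - s)) (0, (0, 0))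
    rw [Real.dist_eq] at h1
    have h2 : dist ((v, (Y s, t - s)))
        ((0, (0, 0)) : EuclideanSpace ℝ (Fin (N+1)) × EuclideanSpace ℝ (Fin N) × ℝ)
        ≤ M + (|R| + t) := by
      rw [Prod.dist_eq, Prod.dist_eq]
      have e1 : dist v 0 ≤ M := by rwa [dist_zero_right]
      have e2 : dist (Y s) 0 ≤ |R| := by
        rw [dist_zero_right]
        have := hR (Set.mem_image_of_mem Y hs)
        rw [Metric.mem_closedBall, dist_zero_right] at this
        exact this.trans (le_abs_self R)
      have e3 : dist (t - s) 0 ≤ t := by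
        rw [Real.dist_eq, sub_zero, abs_of_nonneg (by linarith [hs.2])]
        linarith [hs.1]
      have h3 : (0:ℝ) ≤ |R| := abs_nonneg R
      refine max_le (by linarith) (max_le (by linarith) (by linarith))
    have h3 : |φ v (Y s) (t - s)| - |φ 0 0 0| ≤ |φ v (Y s) (t - s) - φ 0 0 0| :=
      abs_sub_abs_le_abs_sub _ _
    have h4 : |φ v (Y s) (t - s) - φ 0 0 0| ≤ L * (M + (|R| + t)) :=
      h1.trans (mul_le_mul_of_nonneg_left h2 L.coe_nonneg)
    linarith
  -- integrability helper
  have hint : ∀ (u : ℝ → EuclideanSpace ℝ (Fin (N+1))) (Y : ℝ → EuclideanSpace ℝ (Fin N)),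
      Measurable u → (∀ s, ‖u s‖ ≤ M) → ContinuousOn Y (Set.Icc 0 t) →
      Integrable (fun s => φ (u s) (Y s) (t - s)) (volume.restrict (Set.Icc (0:ℝ) t)) := by
    intro u Y hu hub hY
    obtain ⟨B, hB⟩ := hφbd Y hY
    have hYm : AEMeasurable Y (volume.restrict (Set.Icc (0:ℝ) t)) :=
      hY.aemeasurable measurableSet_Icc
    have h1 : AEMeasurable (fun s => ((u s, (Y s, t - s)) :
        EuclideanSpace ℝ (Fin (N+1)) × EuclideanSpace ℝ (Fin N) × ℝ))
        (volume.restrict (Set.Icc (0:ℝ) t)) :=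
      hu.aemeasurable.prodMk (hYm.prodMk (measurable_const.sub measurable_id).aemeasurable)
    have hmeas : AEMeasurable (fun s => φ (u s) (Y s) (t - s))
        (volume.restrict (Set.Icc (0:ℝ) t)) := hφcont.measurable.comp_aemeasurable h1
    refine ⟨hmeas.aestronglyMeasurable, HasFiniteIntegral.of_bounded (C := B) ?_⟩
    filter_upwards [ae_restrict_mem measurableSet_Icc] with s hs
    rw [Real.norm_eq_abs]
    exact hB (u s) s (hub s) hs
  have haeIco : ∀ᵐ s ∂(volume.restrict (Set.Icc (0:ℝ) t)), s ∈ Set.Ico (0:ℝ) t := by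
    rw [ae_iff]
    have h1 : {s : ℝ | ¬ s ∈ Set.Ico (0:ℝ) t} = (Set.Ico (0:ℝ) t)ᶜ := rfl
    rw [h1, Measure.restrict_apply measurableSet_Ico.compl]
    have h2 : (Set.Ico (0:ℝ) t)ᶜ ∩ Set.Icc 0 t ⊆ {t} := by
      rintro s ⟨hs1, hs2⟩
      simp only [Set.mem_compl_iff, Set.mem_Ico, not_and, not_lt] at hs1
      have := hs1 hs2.1
      have : s = t := le_antisymm hs2.2 this
      simp [this]
    exact measure_mono_null h2 (measure_singleton t)
  -- the main estimate
  have main : ∀ ε : ℝ, 0 < ε →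
      (∫ s in Set.Icc (0:ℝ) t, φ (glim s) (Xlim s) (t - s)) ≤ ε := by
    intro ε hε
    set ε₀ : ℝ := ε / ((L + 3) * t + 1) with hε₀def
    have hLt : (0:ℝ) < ((L:ℝ) + 3) * t + 1 := by positivity
    have hε₀ : 0 < ε₀ := div_pos hε hLt
    -- uniform continuity in s
    have hGuc : UniformContinuousOn
        (fun s => ((Xlim s, t - s) : EuclideanSpace ℝ (Fin N) × ℝ)) (Set.Icc 0 t) :=
      isCompact_Icc.uniformContinuousOn_of_continuous
        (hXlimc.prodMk ((continuous_const.sub continuous_id).continuousOn))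
    obtain ⟨δ, hδpos, hδ⟩ := Metric.uniformContinuousOn_iff.1 hGuc (ε₀ / (L + 1)) (by positivity)
    have hδF : ∀ (v : EuclideanSpace ℝ (Fin (N+1))) s s', s ∈ Set.Icc (0:ℝ) t →
        s' ∈ Set.Icc (0:ℝ) t → dist s s' < δ →
        |φ v (Xlim s) (t - s) - φ v (Xlim s') (t - s')| ≤ ε₀ := by
      intro v s s' hs hs' hss
      have h1 := hlipG v (Xlim s) (Xlim s') (t - s) (t - s')
      have h2 := hδ s hs s' hs' hss
      have h3 : (L:ℝ) * dist ((Xlim s, t - s)) ((Xlim s', t - s')) ≤ L * (ε₀ / (L + 1)) :=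
        mul_le_mul_of_nonneg_left h2.le L.coe_nonneg
      have h4 : (L:ℝ) * (ε₀ / (L + 1)) ≤ ε₀ := by
        rw [mul_div_assoc']
        rw [div_le_iff₀ (by positivity)]
        nlinarith [L.coe_nonneg, hε₀]
      linarith
    -- finite net of the ball
    obtain ⟨T, hTsub, hTfin, hTcover⟩ :=
      finite_cover_balls_of_compact
        (isCompact_closedBall (0 : EuclideanSpace ℝ (Fin (N+1))) M)
        (e := ε₀ / (2*(L + 1))) (by positivity)
    set lst := hTfin.toFinset.toList with hlst
    set K := lst.length with hKdef
    have hK : 0 < K := by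
      have h0mem := hTcover (Metric.mem_closedBall_self hM.le)
      rw [Set.mem_iUnion₂] at h0mem
      obtain ⟨y, hyT, -⟩ := h0mem
      rw [hKdef, List.length_pos_iff]
      intro hnil
      have hy : y ∈ lst := by
        rw [hlst, Finset.mem_toList, Set.Finite.mem_toFinset]
        exact hyT
      rw [hnil] at hy
      simp at hy
    set wk : ℕ → EuclideanSpace ℝ (Fin (N+1)) :=
      fun k => if h : k < K then lst.get ⟨k, h⟩ else 0 with hwk
    have hwknorm : ∀ k, ‖wk k‖ ≤ M := by
      intro k
      by_cases h : k < K
      · have hek : wk k = lst.get ⟨k, h⟩ := dif_pos h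
        rw [hek]
        have hmem : lst.get ⟨k, h⟩ ∈ T :=
          (Set.Finite.mem_toFinset hTfin).1 (Finset.mem_toList.1 (List.get_mem lst ⟨k, h⟩))
        have := hTsub hmem
        rwa [Metric.mem_closedBall, dist_zero_right] at this
      · have hek : wk k = 0 := dif_neg h
        rw [hek]; simpa using hM.le
    have hnet : ∀ v : EuclideanSpace ℝ (Fin (N+1)), ‖v‖ ≤ M →
        ∃ k < K, ‖v - wk k‖ ≤ ε₀ / (2*(L + 1)) := by
      intro v hv
      have hvmem : v ∈ ⋃ y ∈ T, Metric.ball y (ε₀ / (2*(L + 1))) :=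
        hTcover (by rwa [Metric.mem_closedBall, dist_zero_right])
      rw [Set.mem_iUnion₂] at hvmem
      obtain ⟨y, hyT, hyball⟩ := hvmem
      have hy : y ∈ lst := by rw [hlst, Finset.mem_toList, Set.Finite.mem_toFinset]; exact hyT
      obtain ⟨i, hi⟩ := List.mem_iff_get.1 hy
      refine ⟨i.1, i.2, ?_⟩
      have : wk i.1 = y := by
        have hek : wk i.1 = lst.get ⟨i.1, i.2⟩ := dif_pos i.2
        rw [hek, ← hi]
      rw [this, ← dist_eq_norm]
      exact (Metric.mem_ball.1 hyball).le
    -- the partition of [0,t]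
    obtain ⟨m0, hm0⟩ := exists_nat_gt (t / δ)
    have hm0pos : 0 < m0 := by
      have h1 : (0:ℝ) < m0 := lt_trans (div_pos ht hδpos) hm0
      exact_mod_cast h1
    have hm0r : (0:ℝ) < m0 := by exact_mod_cast hm0pos
    have htm : t / m0 < δ := by
      rw [div_lt_iff₀ hm0r]
      rw [div_lt_iff₀ hδpos] at hm0
      linarith [hm0]
    set sj : ℕ → ℝ := fun j => (j:ℝ) * t / m0 with hsj
    have hsjIcc : ∀ j, j ≤ m0 → sj j ∈ Set.Icc (0:ℝ) t := by
      intro j hj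
      constructor
      · rw [hsj]; positivity
      · rw [hsj, div_le_iff₀ hm0r]
        have : (j:ℝ) ≤ m0 := by exact_mod_cast hj
        nlinarith
    -- subgradients
    have hsubex : ∀ j k : ℕ, ∃ p : EuclideanSpace ℝ (Fin (N+1)), ‖p‖ ≤ L ∧
        ∀ v, φ (wk k) (Xlim (sj j)) (t - sj j) + ⟪p, v - wk k⟫ ≤ φ v (Xlim (sj j)) (t - sj j) :=
      fun j k => exists_subgradient' L _ (hφconv _ _) (hlipv _ _) (wk k)
    choose P0 hP0norm hP0sub using hsubex
    set c0 : ℕ → ℕ → ℝ :=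
      fun j k => φ (wk k) (Xlim (sj j)) (t - sj j) - ⟪P0 j k, wk k⟫ with hc0
    set A : ℕ → ℕ → EuclideanSpace ℝ (Fin (N+1)) → ℝ :=
      fun j k v => ⟪P0 j k, v⟫ + c0 j k with hA
    have hA_le : ∀ j k v, A j k v ≤ φ v (Xlim (sj j)) (t - sj j) := by
      intro j k v
      have h1 := hP0sub j k v
      rw [inner_sub_right] at h1
      simp only [hA, hc0]
      linarith
    -- the measurable selection
    set q : ℝ → ℕ → Prop := fun s i =>
      (i < m0 * K ∧ s ∈ Set.Ico (sj (i / K)) (sj (i / K + 1)) ∧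
        ∀ k' < K, A (i / K) k' (glim s) ≤ A (i / K) (i % K) (glim s)) ∨ i = m0 * K with hq
    have hex : ∀ s, ∃ i, q s i := fun s => ⟨m0 * K, Or.inr rfl⟩
    set σ : ℝ → ℕ := fun s => Nat.find (hex s) with hσ
    have hAmeas : ∀ j k, Measurable (fun s => A j k (glim s)) := by
      intro j k
      exact (Measurable.inner measurable_const hglimmeas).add measurable_const
    have hqmeas : ∀ i, MeasurableSet {s : ℝ | q s i} := by
      intro i
      by_cases hi : i = m0 * K
      · have : {s : ℝ | q s i} = Set.univ := by
          ext s; simp [hq, hi]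
        rw [this]; exact MeasurableSet.univ
      · have heq : {s : ℝ | q s i} = if i < m0 * K then
            (Set.Ico (sj (i / K)) (sj (i / K + 1)) ∩
              ⋂ (k' : ℕ), ⋂ (_ : k' < K),
                {s : ℝ | A (i / K) k' (glim s) ≤ A (i / K) (i % K) (glim s)}) else ∅ := by
          ext s
          by_cases h2 : i < m0 * K <;>
            simp [hq, hi, h2, Set.mem_iInter, Set.mem_setOf_eq]
        rw [heq]
        split
        · exact measurableSet_Ico.inter (MeasurableSet.iInter fun k' =>
            MeasurableSet.iInter fun _ => measurableSet_le (hAmeas _ _) (hAmeas _ _))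
        · exact MeasurableSet.empty
    have hσmeas : Measurable σ := measurable_find hex hqmeas
    -- key properties of the selection on [0, t)
    have fact_spec : ∀ s ∈ Set.Ico (0:ℝ) t, σ s < m0 * K ∧
        s ∈ Set.Ico (sj (σ s / K)) (sj (σ s / K + 1)) ∧ σ s / K < m0 ∧
        ∀ k' < K, A (σ s / K) k' (glim s) ≤ A (σ s / K) (σ s % K) (glim s) := by
      intro s hs
      obtain ⟨hs0, hst⟩ := hs
      -- construct a witness index
      set j : ℕ := Nat.floor (s * m0 / t) with hj
      have hjle : (j:ℝ) ≤ s * m0 / t := Nat.floor_le (by positivity)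
      have hjlt : s * m0 / t < j + 1 := Nat.lt_floor_add_one _
      have hjm : j < m0 := by
        have h1 : s * m0 / t < m0 := by
          rw [div_lt_iff₀ ht]; nlinarith
        have := (Nat.floor_lt (by positivity)).2 h1
        exact this
      have h1 : (j:ℝ) * t ≤ s * m0 := by
        rw [le_div_iff₀ ht] at hjle; linarith
      have h2 : s * m0 < ((j:ℝ) + 1) * t := by
        rw [div_lt_iff₀ ht] at hjlt; linarith
      have hsIj : s ∈ Set.Ico (sj j) (sj (j + 1)) := by
        constructor
        · rw [hsj]; simp only
          rw [div_le_iff₀ hm0r]; linarith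
        · rw [hsj]; simp only
          rw [lt_div_iff₀ hm0r]; push_cast; linarith
      obtain ⟨k, hkmem, hkmax⟩ := Finset.exists_max_image (Finset.range K)
        (fun k' => A j k' (glim s)) ⟨0, Finset.mem_range.2 hK⟩
      rw [Finset.mem_range] at hkmem
      set i : ℕ := k + j * K with hi
      have hiK : i < m0 * K := by
        have : i < (j + 1) * K := by
          rw [hi]; rw [add_mul, one_mul]; omega
        have h3 : (j + 1) * K ≤ m0 * K := Nat.mul_le_mul_right K hjm
        omega
      have hidiv : i / K = j := by
        rw [hi, Nat.add_mul_div_right _ _ hK, Nat.div_eq_of_lt hkmem, zero_add]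
      have himod : i % K = k := by
        rw [hi, Nat.add_mul_mod_self_right, Nat.mod_eq_of_lt hkmem]
      have hqsi : q s i := by
        rw [hq]
        left
        refine ⟨hiK, ?_, ?_⟩
        · rw [hidiv]; exact hsIj
        · intro k' hk'
          rw [hidiv, himod]
          exact hkmax k' (Finset.mem_range.2 hk')
      have hσle : σ s ≤ i := Nat.find_min' (hex s) hqsi
      have hspec : q s (σ s) := Nat.find_spec (hex s)
      have hσlt : σ s < m0 * K := lt_of_le_of_lt hσle hiK
      rw [hq] at hspec
      rcases hspec with hspec | hspec
      · refine ⟨hσlt, hspec.2.1, ?_, hspec.2.2⟩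
        rw [Nat.div_lt_iff_lt_mul hK]
        exact hσlt
      · omega
    -- the test functions
    set Pv : ℝ → EuclideanSpace ℝ (Fin (N+1)) :=
      fun s => if σ s < m0 * K then P0 (σ s / K) (σ s % K) else 0 with hPv
    set Cv : ℝ → ℝ :=
      fun s => if σ s < m0 * K then c0 (σ s / K) (σ s % K) else 0 with hCv
    have hPmeas : Measurable Pv := by
      have : Pv = (fun i : ℕ => if i < m0 * K then P0 (i / K) (i % K) else 0) ∘ σ := rfl
      rw [this]
      exact measurable_from_top.comp hσmeas
    have hCmeas : Measurable Cv := by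
      have : Cv = (fun i : ℕ => if i < m0 * K then c0 (i / K) (i % K) else 0) ∘ σ := rfl
      rw [this]
      exact measurable_from_top.comp hσmeas
    have hPnorm : ∀ s, ‖Pv s‖ ≤ L := by
      intro s
      by_cases h : σ s < m0 * K
      · have hek : Pv s = P0 (σ s / K) (σ s % K) := if_pos h
        rw [hek]; exact hP0norm _ _
      · have hek : Pv s = 0 := if_neg h
        rw [hek]; simpa using L.coe_nonneg
    obtain ⟨B, hB⟩ := hφbd Xlim hXlimc
    have hBpos : 0 ≤ B := le_trans (abs_nonneg _) (hB 0 0 (by simpa using hM.le) (by constructor <;> linarith))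
    have hCbd : ∀ s, |Cv s| ≤ B + L * M := by
      intro s
      by_cases h : σ s < m0 * K
      · have hek : Cv s = c0 (σ s / K) (σ s % K) := if_pos h
        rw [hek]
        have hjm : σ s / K < m0 := by rwa [Nat.div_lt_iff_lt_mul hK]
        have h1 : |φ (wk (σ s % K)) (Xlim (sj (σ s / K))) (t - sj (σ s / K))| ≤ B :=
          hB _ _ (hwknorm _) (hsjIcc _ hjm.le)
        have h2 : |⟪P0 (σ s / K) (σ s % K), wk (σ s % K)⟫| ≤ L * M := by
          refine (abs_real_inner_le_norm _ _).trans ?_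
          exact mul_le_mul (hP0norm _ _) (hwknorm _) (norm_nonneg _) L.coe_nonneg
        rw [hc0]
        simp only
        have := abs_sub (φ (wk (σ s % K)) (Xlim (sj (σ s / K))) (t - sj (σ s / K)))
          (⟪P0 (σ s / K) (σ s % K), wk (σ s % K)⟫)
        calc |φ (wk (σ s % K)) (Xlim (sj (σ s / K))) (t - sj (σ s / K)) -
            ⟪P0 (σ s / K) (σ s % K), wk (σ s % K)⟫| ≤
            |φ (wk (σ s % K)) (Xlim (sj (σ s / K))) (t - sj (σ s / K))| +
            |⟪P0 (σ s / K) (σ s % K), wk (σ s % K)⟫| := abs_sub _ _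
        _ ≤ B + L * M := add_le_add h1 h2
      · have hek : Cv s = 0 := if_neg h
        rw [hek]
        simp only [abs_zero]
        positivity
    -- integrability
    have intP : Integrable Pv (volume.restrict (Set.Icc (0:ℝ) t)) := by
      refine ⟨hPmeas.aestronglyMeasurable, HasFiniteIntegral.of_bounded (C := (L:ℝ)) ?_⟩
      exact Filter.Eventually.of_forall hPnorm
    have intC : Integrable Cv (volume.restrict (Set.Icc (0:ℝ) t)) := by
      refine ⟨hCmeas.aestronglyMeasurable, HasFiniteIntegral.of_bounded (C := B + L * M) ?_⟩
      refine Filter.Eventually.of_forall fun s => ?_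
      rw [Real.norm_eq_abs]; exact hCbd s
    have intIP : ∀ (u : ℝ → EuclideanSpace ℝ (Fin (N+1))), Measurable u → (∀ s, ‖u s‖ ≤ M) →
        Integrable (fun s => ⟪u s, Pv s⟫) (volume.restrict (Set.Icc (0:ℝ) t)) := by
      intro u hu hub
      refine ⟨(hu.inner hPmeas).aestronglyMeasurable,
        HasFiniteIntegral.of_bounded (C := M * L) ?_⟩
      refine Filter.Eventually.of_forall fun s => ?_
      rw [Real.norm_eq_abs]
      refine (abs_real_inner_le_norm _ _).trans ?_
      exact mul_le_mul (hub s) (hPnorm s) (norm_nonneg _) hM.le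
    have intFglim := hint glim Xlim hglimmeas hglimbd hXlimc
    have intFgn : ∀ n, Integrable (fun s => φ (g n s) (Xlim s) (t - s))
        (volume.restrict (Set.Icc (0:ℝ) t)) :=
      fun n => hint (g n) Xlim (hgmeas n) (hgbd n) hXlimc
    have intφn : ∀ n, Integrable (fun s => φ (g n s) (X n s) (t - s))
        (volume.restrict (Set.Icc (0:ℝ) t)) :=
      fun n => hint (g n) (X n) (hgmeas n) (hgbd n) (hXcont n)
    -- pointwise facts
    have fact1 : ∀ s ∈ Set.Ico (0:ℝ) t, ∀ v : EuclideanSpace ℝ (Fin (N+1)),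
        ⟪Pv s, v⟫ + Cv s ≤ φ v (Xlim s) (t - s) + ε₀ := by
      intro s hs v
      obtain ⟨hσlt, hsIj, hjm, hmax⟩ := fact_spec s hs
      have hPeq : Pv s = P0 (σ s / K) (σ s % K) := if_pos hσlt
      have hCeq : Cv s = c0 (σ s / K) (σ s % K) := if_pos hσlt
      have h1 : A (σ s / K) (σ s % K) v ≤ φ v (Xlim (sj (σ s / K))) (t - sj (σ s / K)) :=
        hA_le _ _ _
    -- distance bound
      have hsj1 : sj (σ s / K + 1) - sj (σ s / K) = t / m0 := by
        rw [hsj]; push_cast; field_simp; ring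
      have hdist : dist (sj (σ s / K)) s < δ := by
        rw [Real.dist_eq, abs_of_nonpos (by linarith [hsIj.1])]
        have := hsIj.2
        linarith [hsIj.1, hsIj.2, htm]
      have h2 : |φ v (Xlim (sj (σ s / K))) (t - sj (σ s / K)) - φ v (Xlim s) (t - s)| ≤ ε₀ :=
        hδF v (sj (σ s / K)) s (hsjIcc _ hjm.le) (Set.Ico_subset_Icc_self hs) hdist
      have h3 : ⟪Pv s, v⟫ + Cv s = A (σ s / K) (σ s % K) v := by
        rw [hPeq, hCeq]
      rw [h3]
      have := abs_le.1 h2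
      linarith [this.1, this.2]
    have fact2 : ∀ s ∈ Set.Ico (0:ℝ) t,
        φ (glim s) (Xlim s) (t - s) ≤ ⟪Pv s, glim s⟫ + Cv s + 2 * ε₀ := by
      intro s hs
      obtain ⟨hσlt, hsIj, hjm, hmax⟩ := fact_spec s hs
      have hPeq : Pv s = P0 (σ s / K) (σ s % K) := if_pos hσlt
      have hCeq : Cv s = c0 (σ s / K) (σ s % K) := if_pos hσlt
      obtain ⟨k', hk'K, hk'near⟩ := hnet (glim s) (hglimbd s)
      -- lower bound for A (σ s / K) k' (glim s)
      have e1 : |φ (glim s) (Xlim (sj (σ s / K))) (t - sj (σ s / K)) -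
          φ (wk k') (Xlim (sj (σ s / K))) (t - sj (σ s / K))| ≤ L * ‖glim s - wk k'‖ := by
        have := (hlipv (Xlim (sj (σ s / K))) (t - sj (σ s / K))).dist_le_mul (glim s) (wk k')
        rwa [Real.dist_eq, dist_eq_norm] at this
      have e2 : |⟪P0 (σ s / K) k', glim s - wk k'⟫| ≤ L * ‖glim s - wk k'‖ := by
        refine (abs_real_inner_le_norm _ _).trans ?_
        exact mul_le_mul_of_nonneg_right (hP0norm _ _) (norm_nonneg _)
      have e3 : A (σ s / K) k' (glim s) =
          φ (wk k') (Xlim (sj (σ s / K))) (t - sj (σ s / K)) + ⟪P0 (σ s / K) k', glim s - wk k'⟫ := by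
        simp only [hA, hc0, inner_sub_right]
        ring
      have e5 : (L:ℝ) * ‖glim s - wk k'‖ ≤ ε₀ / 2 := by
        have h1 : (L:ℝ) * ‖glim s - wk k'‖ ≤ L * (ε₀ / (2*(L + 1))) :=
          mul_le_mul_of_nonneg_left hk'near L.coe_nonneg
        have h2 : (L:ℝ) * (ε₀ / (2*(L + 1))) ≤ ε₀ / 2 := by
          rw [mul_div_assoc', div_le_div_iff₀ (by positivity) (by norm_num)]
          nlinarith [L.coe_nonneg, hε₀]
        linarith
      -- uniform continuity step
      have hsj1 : sj (σ s / K + 1) - sj (σ s / K) = t / m0 := by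
        rw [hsj]; push_cast; field_simp; ring
      have hdist : dist (sj (σ s / K)) s < δ := by
        rw [Real.dist_eq, abs_of_nonpos (by linarith [hsIj.1])]
        linarith [hsIj.1, hsIj.2, htm]
      have e6 : |φ (glim s) (Xlim (sj (σ s / K))) (t - sj (σ s / K)) -
          φ (glim s) (Xlim s) (t - s)| ≤ ε₀ :=
        hδF (glim s) (sj (σ s / K)) s (hsjIcc _ hjm.le) (Set.Ico_subset_Icc_self hs) hdist
      have e7 := hmax k' hk'K
      have h3 : ⟪Pv s, glim s⟫ + Cv s = A (σ s / K) (σ s % K) (glim s) := by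
        rw [hPeq, hCeq]
      rw [h3]
      have he1 := abs_le.1 e1
      have he2 := abs_le.1 e2
      have he6 := abs_le.1 e6
      linarith [he1.1, he1.2, he2.1, he2.2, he6.1, he6.2, e7, e3 ▸ e7]
    -- integral computations
    have hconst : ∀ c : ℝ, (∫ _ in Set.Icc (0:ℝ) t, c) = c * t := by
      intro c
      rw [setIntegral_const, measureReal_def, Real.volume_Icc, sub_zero, ENNReal.toReal_ofReal ht.le, smul_eq_mul,
        mul_comm]
    have stepA : (∫ s in Set.Icc (0:ℝ) t, φ (glim s) (Xlim s) (t - s)) ≤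
        (∫ s in Set.Icc (0:ℝ) t, ⟪glim s, Pv s⟫) + (∫ s in Set.Icc (0:ℝ) t, Cv s) + 2 * ε₀ * t := by
      have h1 : (∫ s in Set.Icc (0:ℝ) t, φ (glim s) (Xlim s) (t - s)) ≤
          ∫ s in Set.Icc (0:ℝ) t, (⟪glim s, Pv s⟫ + Cv s + 2 * ε₀) := by
        refine integral_mono_ae intFglim (((intIP glim hglimmeas hglimbd).add intC).add
          (integrable_const _)) ?_
        filter_upwards [haeIco] with s hs
        have := fact2 s hs
        rw [real_inner_comm (glim s) (Pv s)] at this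
        linarith
      have h2 : (∫ s in Set.Icc (0:ℝ) t, (⟪glim s, Pv s⟫ + Cv s + 2 * ε₀)) =
          (∫ s in Set.Icc (0:ℝ) t, ⟪glim s, Pv s⟫) + (∫ s in Set.Icc (0:ℝ) t, Cv s) +
            2 * ε₀ * t := by
        have e1 : (∫ s in Set.Icc (0:ℝ) t, (⟪glim s, Pv s⟫ + Cv s + 2 * ε₀)) =
            (∫ s in Set.Icc (0:ℝ) t, (⟪glim s, Pv s⟫ + Cv s)) +
              ∫ _ in Set.Icc (0:ℝ) t, (2 * ε₀ : ℝ) :=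
          integral_add ((intIP glim hglimmeas hglimbd).add intC) (integrable_const _)
        have e2 : (∫ s in Set.Icc (0:ℝ) t, (⟪glim s, Pv s⟫ + Cv s)) =
            (∫ s in Set.Icc (0:ℝ) t, ⟪glim s, Pv s⟫) + ∫ s in Set.Icc (0:ℝ) t, Cv s :=
          integral_add (intIP glim hglimmeas hglimbd) intC
        rw [e1, e2, hconst]
      linarith
    have hTend1 := hweak Pv intP
    have hev : ∀ᶠ n in Filter.atTop,
        (∫ s in Set.Icc (0:ℝ) t, ⟪g n s, Pv s⟫) + (∫ s in Set.Icc (0:ℝ) t, Cv s) ≤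
          (∫ s in Set.Icc (0:ℝ) t, φ (g n s) (X n s) (t - s)) + ((L:ℝ) + 1) * ε₀ * t := by
      have hXev := Metric.tendstoUniformlyOn_iff.1 hXconv ε₀ hε₀
      filter_upwards [hXev] with n hn
      have hstep1 : (∫ s in Set.Icc (0:ℝ) t, ⟪g n s, Pv s⟫) +
          (∫ s in Set.Icc (0:ℝ) t, Cv s) =
          ∫ s in Set.Icc (0:ℝ) t, (⟪g n s, Pv s⟫ + Cv s) :=
        (integral_add (intIP (g n) (hgmeas n) (hgbd n)) intC).symm
      have hstep2 : (∫ s in Set.Icc (0:ℝ) t, (⟪g n s, Pv s⟫ + Cv s)) ≤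
          ∫ s in Set.Icc (0:ℝ) t, (φ (g n s) (Xlim s) (t - s) + ε₀) := by
        refine integral_mono_ae ((intIP (g n) (hgmeas n) (hgbd n)).add intC)
          ((intFgn n).add (integrable_const _)) ?_
        filter_upwards [haeIco] with s hs
        have := fact1 s hs (g n s)
        rw [real_inner_comm (g n s) (Pv s)] at this
        linarith
      have hstep3 : (∫ s in Set.Icc (0:ℝ) t, (φ (g n s) (Xlim s) (t - s) + ε₀)) =
          (∫ s in Set.Icc (0:ℝ) t, φ (g n s) (Xlim s) (t - s)) + ε₀ * t := by
        have e1 : (∫ s in Set.Icc (0:ℝ) t, (φ (g n s) (Xlim s) (t - s) + ε₀)) =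
            (∫ s in Set.Icc (0:ℝ) t, φ (g n s) (Xlim s) (t - s)) +
              ∫ _ in Set.Icc (0:ℝ) t, (ε₀ : ℝ) := integral_add (intFgn n) (integrable_const _)
        rw [e1, hconst]
      have hstep4 : (∫ s in Set.Icc (0:ℝ) t, φ (g n s) (Xlim s) (t - s)) ≤
          ∫ s in Set.Icc (0:ℝ) t, (φ (g n s) (X n s) (t - s) + (L:ℝ) * ε₀) := by
        refine integral_mono_ae (intFgn n) ((intφn n).add (integrable_const _)) ?_
        filter_upwards [ae_restrict_mem measurableSet_Icc] with s hs
        have h1 := hlipG (g n s) (Xlim s) (X n s) (t - s) (t - s)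
        have h2 : dist ((Xlim s, t - s)) ((X n s, t - s)) = dist (Xlim s) (X n s) := by
          rw [Prod.dist_eq, dist_self, max_eq_left dist_nonneg]
        rw [h2] at h1
        have h3 := hn s hs
        have h4 : (L:ℝ) * dist (Xlim s) (X n s) ≤ L * ε₀ :=
          mul_le_mul_of_nonneg_left h3.le L.coe_nonneg
        have := abs_le.1 h1
        linarith [this.1, this.2]
      have hstep5 : (∫ s in Set.Icc (0:ℝ) t, (φ (g n s) (X n s) (t - s) + (L:ℝ) * ε₀)) =
          (∫ s in Set.Icc (0:ℝ) t, φ (g n s) (X n s) (t - s)) + (L:ℝ) * ε₀ * t := by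
        have e1 : (∫ s in Set.Icc (0:ℝ) t, (φ (g n s) (X n s) (t - s) + (L:ℝ) * ε₀)) =
            (∫ s in Set.Icc (0:ℝ) t, φ (g n s) (X n s) (t - s)) +
              ∫ _ in Set.Icc (0:ℝ) t, ((L:ℝ) * ε₀ : ℝ) :=
          integral_add (intφn n) (integrable_const _)
        rw [e1, hconst]
      rw [hstep1]
      calc (∫ s in Set.Icc (0:ℝ) t, (⟪g n s, Pv s⟫ + Cv s)) ≤
          (∫ s in Set.Icc (0:ℝ) t, φ (g n s) (Xlim s) (t - s)) + ε₀ * t := by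
            rw [← hstep3]; exact hstep2
      _ ≤ (∫ s in Set.Icc (0:ℝ) t, φ (g n s) (X n s) (t - s)) + (L:ℝ) * ε₀ * t + ε₀ * t := by
            have := hstep4.trans_eq hstep5
            linarith
      _ = (∫ s in Set.Icc (0:ℝ) t, φ (g n s) (X n s) (t - s)) + ((L:ℝ) + 1) * ε₀ * t := by ring
    have hTend2 : Filter.Tendsto
        (fun n => (∫ s in Set.Icc (0:ℝ) t, φ (g n s) (X n s) (t - s)) + ((L:ℝ) + 1) * ε₀ * t)
        Filter.atTop (nhds (0 + ((L:ℝ) + 1) * ε₀ * t)) :=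
      hlim.add tendsto_const_nhds
    have hTend1' : Filter.Tendsto
        (fun n => (∫ s in Set.Icc (0:ℝ) t, ⟪g n s, Pv s⟫) + (∫ s in Set.Icc (0:ℝ) t, Cv s))
        Filter.atTop
        (nhds ((∫ s in Set.Icc (0:ℝ) t, ⟪glim s, Pv s⟫) + (∫ s in Set.Icc (0:ℝ) t, Cv s))) :=
      hTend1.add tendsto_const_nhds
    have hfinal1 : (∫ s in Set.Icc (0:ℝ) t, ⟪glim s, Pv s⟫) + (∫ s in Set.Icc (0:ℝ) t, Cv s) ≤
        0 + ((L:ℝ) + 1) * ε₀ * t :=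
      le_of_tendsto_of_tendsto hTend1' hTend2 hev
    have harith : ((L:ℝ) + 3) * ε₀ * t ≤ ε := by
      have h1 : ε₀ * (((L:ℝ) + 3) * t + 1) = ε := div_mul_cancel₀ ε (ne_of_gt hLt)
      nlinarith [hε₀]
    calc (∫ s in Set.Icc (0:ℝ) t, φ (glim s) (Xlim s) (t - s)) ≤
        (∫ s in Set.Icc (0:ℝ) t, ⟪glim s, Pv s⟫) + (∫ s in Set.Icc (0:ℝ) t, Cv s) +
          2 * ε₀ * t := stepA
    _ ≤ 0 + ((L:ℝ) + 1) * ε₀ * t + 2 * ε₀ * t := by linarith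
    _ = ((L:ℝ) + 3) * ε₀ * t := by ring
    _ ≤ ε := harith
  have hnonneg : 0 ≤ ∫ s in Set.Icc (0:ℝ) t, φ (glim s) (Xlim s) (t - s) :=
    setIntegral_nonneg measurableSet_Icc fun s _ => hφpos _ _ _
  have hle : (∫ s in Set.Icc (0:ℝ) t, φ (glim s) (Xlim s) (t - s)) ≤ 0 := by
    refine le_of_forall_pos_le_add fun ε hε => ?_
    rw [zero_add]
    exact main ε hε
  linarith
end

section
/- Let K ⊆ ℝ^N × ℝ be nonempty, compact, and convex, let V ⊆ ℝ^N be a linear subspace, p ∈ ℝ^N, and define χ(q) := sup_{(b,l) ∈ K} (−b·(p+q) − l). Suppose q̄ ∈ V^⊥ minimizes χ over V^⊥. Then there exists (b,l) ∈ K with b ∈ V and χ(q̄) = −b·(p+q̄) − l; consequently sup_{(b,l) ∈ K, b ∈ V} (−b·p − l) ≥ min_{q ∈ V^⊥} χ(q). -/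
open scoped RealInnerProductSpace

private abbrev Esp (N : ℕ) := EuclideanSpace ℝ (Fin N)

/-- If `q̄ ∈ V^⊥` minimizes `χ(q) = sup_{(b,l) ∈ K} (-b·(p+q) - l)` over
`V^⊥` (with `K` nonempty compact convex), then some `(b,l) ∈ K` with `b ∈ V` attains
`χ(q̄)`; consequently `sup_{(b,l) ∈ K, b ∈ V} (-b·p - l) ≥ χ(q̄)`. -/
theorem stmt9 (N : ℕ) (K : Set (EuclideanSpace ℝ (Fin N) × ℝ))
    (hne : K.Nonempty) (hcomp : IsCompact K) (hconv : Convex ℝ K)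
    (V : Submodule ℝ (EuclideanSpace ℝ (Fin N)))
    (p : EuclideanSpace ℝ (Fin N))
    (χ : EuclideanSpace ℝ (Fin N) → ℝ)
    (hχ : ∀ q, χ q = sSup ((fun bl : EuclideanSpace ℝ (Fin N) × ℝ =>
      -⟪bl.1, p + q⟫ - bl.2) '' K))
    (qbar : EuclideanSpace ℝ (Fin N)) (hqbar : qbar ∈ Vᗮ)
    (hmin : ∀ q ∈ Vᗮ, χ qbar ≤ χ q) :
    (∃ bl ∈ K, bl.1 ∈ V ∧ χ qbar = -⟪bl.1, p + qbar⟫ - bl.2) ∧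
      χ qbar ≤ sSup {r : ℝ | ∃ bl ∈ K, bl.1 ∈ V ∧ r = -⟪bl.1, p⟫ - bl.2} := by
  classical
  
  -- continuity of the objective for each q
  have hcont : ∀ q : Esp N, Continuous (fun bl : Esp N × ℝ => -⟪bl.1, p + q⟫ - bl.2) :=
    fun q => ((continuous_fst.inner continuous_const).neg).sub continuous_snd
  -- upper bound: every value is ≤ χ q
  have hub : ∀ q : Esp N, ∀ bl ∈ K, -⟪bl.1, p + q⟫ - bl.2 ≤ χ q := by
    intro q bl hbl
    rw [hχ q]
    exact le_csSup ((hcomp.image (hcont q)).bddAbove) (Set.mem_image_of_mem _ hbl)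
  -- the max is attained
  have hmax : ∀ q : Esp N, ∃ bl ∈ K, χ q = -⟪bl.1, p + q⟫ - bl.2 := by
    intro q
    obtain ⟨bl, hblK, hblmax⟩ := hcomp.exists_isMaxOn hne (hcont q).continuousOn
    refine ⟨bl, hblK, ?_⟩
    rw [hχ q]
    apply IsGreatest.csSup_eq
    refine ⟨Set.mem_image_of_mem _ hblK, ?_⟩
    rintro r ⟨x, hx, rfl⟩
    exact hblmax hx
  -- f at qbar
  set f : Esp N × ℝ → ℝ := fun bl => -⟪bl.1, p + qbar⟫ - bl.2 with hfdef
  -- active set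
  set A : Set (Esp N × ℝ) := {bl ∈ K | f bl = χ qbar} with hAdef
  have hAne : A.Nonempty := by
    obtain ⟨bl, hblK, hbl⟩ := hmax qbar
    exact ⟨bl, hblK, hbl.symm⟩
  have hAsub : A ⊆ K := fun bl hbl => hbl.1
  have hAcomp : IsCompact A := by
    have : A = K ∩ f ⁻¹' {χ qbar} := rfl
    rw [this]
    exact hcomp.inter_right ((isClosed_singleton).preimage (hcont qbar))
  have hAconv : Convex ℝ A := by
    intro x hx y hy a b ha hb hab
    refine ⟨hconv hx.1 hy.1 ha hb hab, ?_⟩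
    have hx2 := hx.2
    have hy2 := hy.2
    simp only [hfdef] at hx2 hy2 ⊢
    have : (a • x + b • y).1 = a • x.1 + b • y.1 := rfl
    rw [this]
    have h2 : (a • x + b • y).2 = a * x.2 + b * y.2 := rfl
    rw [h2, inner_add_left, real_inner_smul_left, real_inner_smul_left]
    have e1 : a * (-⟪x.1, p + qbar⟫ - x.2) = a * χ qbar := by rw [hx2]
    have e2 : b * (-⟪y.1, p + qbar⟫ - y.2) = b * χ qbar := by rw [hy2]
    linear_combination e1 + e2 + χ qbar * hab
  -- main claim: some active point has first coordinate in V
  have hkey : ∃ bl ∈ A, bl.1 ∈ V := by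
    by_contra hcon
    push_neg at hcon
    -- projection map
    set π : Esp N × ℝ →L[ℝ] Esp N :=
      (Vᗮ.subtypeL.comp (Vᗮ.orthogonalProjectionOnto)).comp
        (ContinuousLinearMap.fst ℝ (Esp N) ℝ) with hπdef
    have hπ : ∀ bl : Esp N × ℝ, π bl = (Vᗮ.orthogonalProjectionOnto bl.1 : Esp N) := fun bl => rfl
    set P : Set (Esp N) := π '' A with hPdef
    have hPcomp : IsCompact P := hAcomp.image π.continuous
    have hPconv : Convex ℝ P := hAconv.linear_image π.toLinearMap
    have hP0 : (0 : Esp N) ∉ P := by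
      rintro ⟨bl, hblA, hbl0⟩
      apply hcon bl hblA
      rw [hπ] at hbl0
      have : Vᗮ.orthogonalProjectionOnto bl.1 = 0 := by
        exact_mod_cast hbl0
      have hmem : bl.1 ∈ Vᗮᗮ := Submodule.orthogonalProjectionOnto_eq_zero_iff.mp this
      rwa [Submodule.orthogonal_orthogonal] at hmem
    -- separate P from 0
    obtain ⟨φ, u, v, hφP, huv, hφ0⟩ :=
      geometric_hahn_banach_compact_closed hPconv hPcomp (convex_singleton (0:Esp N))
        isClosed_singleton (Set.disjoint_singleton_right.mpr hP0)
    have hv0 : v < 0 := by simpa using hφ0 0 rfl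
    -- Riesz representation
    set d0 : Esp N := (InnerProductSpace.toDual ℝ (Esp N)).symm φ with hd0
    have hd0i : ∀ x : Esp N, ⟪d0, x⟫ = φ x := fun x => InnerProductSpace.toDual_symm_apply
    set d : Esp N := -(Vᗮ.orthogonalProjectionOnto d0 : Esp N) with hddef
    have hdV : d ∈ Vᗮ := neg_mem (Vᗮ.orthogonalProjectionOnto d0).2
    set ε : ℝ := -u with hεdef
    have hε : 0 < ε := by simp only [hεdef]; linarith
    have hactive : ∀ bl ∈ A, ε < ⟪bl.1, d⟫ := by
      intro bl hbl
      have h1 : φ (π bl) < u := hφP _ (Set.mem_image_of_mem _ hbl)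
      rw [← hd0i] at h1
      rw [hπ] at h1
      have h2 : ⟪d0, (Vᗮ.orthogonalProjectionOnto bl.1 : Esp N)⟫
          = ⟪(Vᗮ.orthogonalProjectionOnto d0 : Esp N), bl.1⟫ := by
        exact (Submodule.inner_starProjection_left_eq_right Vᗮ d0 bl.1).symm
      rw [h2] at h1
      have : ⟪bl.1, d⟫ = -⟪(Vᗮ.orthogonalProjectionOnto d0 : Esp N), bl.1⟫ := by
        rw [hddef, inner_neg_right, real_inner_comm]
      rw [this, hεdef]
      linarith
    -- perturbation sequence
    set t : ℕ → ℝ := fun n => 1 / (n + 1) with htdef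
    have htpos : ∀ n, 0 < t n := fun n => Nat.one_div_pos_of_nat
    have htlim : Filter.Tendsto t Filter.atTop (nhds 0) :=
      tendsto_one_div_add_atTop_nhds_zero_nat
    have hqmem : ∀ n, qbar + t n • d ∈ Vᗮ := fun n =>
      Submodule.add_mem _ hqbar (Submodule.smul_mem _ _ hdV)
    -- maximizers at the perturbed points
    have hseq : ∀ n, ∃ bl ∈ K, χ qbar + t n * ⟪bl.1, d⟫ ≤ f bl := by
      intro n
      obtain ⟨bl, hblK, hbl⟩ := hmax (qbar + t n • d)
      refine ⟨bl, hblK, ?_⟩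
      have h1 := hmin _ (hqmem n)
      rw [hbl] at h1
      have h2 : -⟪bl.1, p + (qbar + t n • d)⟫ - bl.2
          = f bl - t n * ⟪bl.1, d⟫ := by
        simp only [hfdef, inner_add_right, real_inner_smul_right]
        ring
      rw [h2] at h1
      linarith
    choose bl hblK hblineq using hseq
    obtain ⟨blstar, hblstarK, σ, hσ, hσlim⟩ := hcomp.tendsto_subseq hblK
    have hfl : Filter.Tendsto (fun n => f (bl (σ n))) Filter.atTop (nhds (f blstar)) :=
      ((hcont qbar).tendsto blstar).comp hσlim
    have hil : Filter.Tendsto (fun n => ⟪(bl (σ n)).1, d⟫) Filter.atTop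
        (nhds ⟪blstar.1, d⟫) :=
      ((continuous_fst.inner continuous_const).tendsto blstar).comp hσlim
    have htσ : Filter.Tendsto (fun n => t (σ n)) Filter.atTop (nhds 0) :=
      htlim.comp hσ.tendsto_atTop
    have hrhs : Filter.Tendsto (fun n => χ qbar + t (σ n) * ⟪(bl (σ n)).1, d⟫)
        Filter.atTop (nhds (χ qbar + 0 * ⟪blstar.1, d⟫)) :=
      tendsto_const_nhds.add (htσ.mul hil)
    have hlim_le : χ qbar + 0 * ⟪blstar.1, d⟫ ≤ f blstar :=
      le_of_tendsto_of_tendsto' hrhs hfl (fun n => hblineq (σ n))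
    have hstar_active : blstar ∈ A := by
      refine ⟨hblstarK, le_antisymm (hub qbar blstar hblstarK) ?_⟩
      simpa using hlim_le
    have hεlt : ε < ⟪blstar.1, d⟫ := hactive blstar hstar_active
    -- eventually the inner product along the subsequence exceeds ε
    have hev : ∀ᶠ n in Filter.atTop, ε < ⟪(bl (σ n)).1, d⟫ :=
      hil.eventually (lt_mem_nhds hεlt)
    obtain ⟨n, hn⟩ := hev.exists
    have h1 := hblineq (σ n)
    have h2 := hub qbar (bl (σ n)) (hblK (σ n))
    have h3 : 0 < t (σ n) * ⟪(bl (σ n)).1, d⟫ :=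
      mul_pos (htpos (σ n)) (lt_trans hε hn)
    simp only [hfdef] at h1 h2
    linarith
  -- conclude
  obtain ⟨bl, hblA, hblV⟩ := hkey
  have hattain : χ qbar = -⟪bl.1, p + qbar⟫ - bl.2 := hblA.2.symm
  refine ⟨⟨bl, hblA.1, hblV, hattain⟩, ?_⟩
  have hqbar0 : ⟪bl.1, qbar⟫ = 0 := by
    exact (Submodule.mem_orthogonal _ _).mp hqbar bl.1 hblV
  have heq : χ qbar = -⟪bl.1, p⟫ - bl.2 := by
    rw [hattain, inner_add_right, hqbar0]; ring
  have hmemS : χ qbar ∈ {r : ℝ | ∃ bl ∈ K, bl.1 ∈ V ∧ r = -⟪bl.1, p⟫ - bl.2} :=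
    ⟨bl, hblA.1, hblV, heq⟩
  have hbdd : BddAbove {r : ℝ | ∃ bl ∈ K, bl.1 ∈ V ∧ r = -⟪bl.1, p⟫ - bl.2} := by
    have hsub : {r : ℝ | ∃ bl ∈ K, bl.1 ∈ V ∧ r = -⟪bl.1, p⟫ - bl.2}
        ⊆ (fun bl : Esp N × ℝ => -⟪bl.1, p⟫ - bl.2) '' K := by
      rintro r ⟨x, hxK, _, rfl⟩
      exact ⟨x, hxK, rfl⟩
    exact (hcomp.image
      (((continuous_fst.inner continuous_const).neg).sub continuous_snd)).bddAbove.mono hsub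
  exact le_csSup hbdd hmemS
end

section
/- Let H_δ(x,t,p) := sup_{|b| ≤ M, |l| ≤ M} ( −b·p − l − δ^{-1} ψ(b,l,x,t) ) where ψ ≥ 0 is Lipschitz with ψ(b,l,x,t) = 0 iff (b,l) ∈ F(x,t), and H(x,t,p) := sup_{(b,l) ∈ F(x,t)} (−b·p − l), with F having nonempty compact images contained in the ball of radius M. Then H_δ ≥ H for every δ > 0, each H_δ is Lipschitz continuous in (x,t,p) (locally in p), and H_δ(x,t,p) ↓ H(x,t,p) pointwise as δ ↓ 0. -/
open scoped RealInnerProductSpace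

/-- The penalized Hamiltonians
`H_δ(x,t,p) = sup_{|b|≤M,|l|≤M} (-b·p - l - δ⁻¹ ψ(b,l,x,t))` dominate
`H(x,t,p) = sup_{(b,l) ∈ F(x,t)} (-b·p - l)`, are Lipschitz in `(x,t,p)` (locally in
`p`), and decrease pointwise to `H` as `δ ↓ 0`. -/
theorem stmt17 (N : ℕ) (M : ℝ) (hM : 0 < M) (Lψ : NNReal)
    (F : EuclideanSpace ℝ (Fin N) × ℝ → Set (EuclideanSpace ℝ (Fin N) × ℝ))
    (hne : ∀ xt, (F xt).Nonempty)
    (hcomp : ∀ xt, IsCompact (F xt))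
    (hbd : ∀ xt, ∀ bl ∈ F xt, ‖bl.1‖ ≤ M ∧ |bl.2| ≤ M)
    (ψ : (EuclideanSpace ℝ (Fin N) × ℝ) → (EuclideanSpace ℝ (Fin N) × ℝ) → ℝ)
    (hψpos : ∀ bl xt, 0 ≤ ψ bl xt)
    (hψlip : LipschitzWith Lψ
      (fun q : (EuclideanSpace ℝ (Fin N) × ℝ) × (EuclideanSpace ℝ (Fin N) × ℝ) =>
        ψ q.1 q.2))
    (hψzero : ∀ bl xt, ψ bl xt = 0 ↔ bl ∈ F xt)
    (Hδ : ℝ → EuclideanSpace ℝ (Fin N) → ℝ → EuclideanSpace ℝ (Fin N) → ℝ)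
    (hHδ : ∀ δ x t p, Hδ δ x t p = sSup ((fun bl : EuclideanSpace ℝ (Fin N) × ℝ =>
      -⟪bl.1, p⟫ - bl.2 - δ⁻¹ * ψ bl (x, t)) ''
        {bl : EuclideanSpace ℝ (Fin N) × ℝ | ‖bl.1‖ ≤ M ∧ |bl.2| ≤ M}))
    (H : EuclideanSpace ℝ (Fin N) → ℝ → EuclideanSpace ℝ (Fin N) → ℝ)
    (hH : ∀ x t p, H x t p = sSup ((fun bl : EuclideanSpace ℝ (Fin N) × ℝ =>
      -⟪bl.1, p⟫ - bl.2) '' F (x, t))) :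
    (∀ δ > (0:ℝ), ∀ x t p, H x t p ≤ Hδ δ x t p) ∧
    (∀ δ > (0:ℝ), ∀ R > (0:ℝ), ∃ C : NNReal, LipschitzOnWith C
      (fun q : (EuclideanSpace ℝ (Fin N) × ℝ) × EuclideanSpace ℝ (Fin N) =>
        Hδ δ q.1.1 q.1.2 q.2)
      (Set.univ ×ˢ Metric.closedBall 0 R)) ∧
    (∀ x t p,
      (∀ δ₁ δ₂ : ℝ, 0 < δ₁ → δ₁ ≤ δ₂ → Hδ δ₁ x t p ≤ Hδ δ₂ x t p) ∧
      Filter.Tendsto (fun δ => Hδ δ x t p) (nhdsWithin 0 (Set.Ioi 0))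
        (nhds (H x t p))) := by
  classical
  set S : Set (EuclideanSpace ℝ (Fin N) × ℝ) :=
    {bl : EuclideanSpace ℝ (Fin N) × ℝ | ‖bl.1‖ ≤ M ∧ |bl.2| ≤ M} with hSdef
  have hSeq : S = Metric.closedBall (0 : EuclideanSpace ℝ (Fin N)) M ×ˢ
      Metric.closedBall (0 : ℝ) M := by
    ext bl
    simp [hSdef, Set.mem_prod, mem_closedBall_zero_iff, Real.norm_eq_abs]
  have hScomp : IsCompact S := by
    rw [hSeq]
    exact (isCompact_closedBall _ _).prod (isCompact_closedBall _ _)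
  have hSne : S.Nonempty := ⟨(0, 0), by simp [hSdef, hM.le]⟩
  have hFS : ∀ xt, F xt ⊆ S := fun xt bl hbl => hbd xt bl hbl
  have hψcont : Continuous
      (fun q : (EuclideanSpace ℝ (Fin N) × ℝ) × (EuclideanSpace ℝ (Fin N) × ℝ) =>
        ψ q.1 q.2) := hψlip.continuous
  have hψcont' : ∀ x t, Continuous
      (fun bl : EuclideanSpace ℝ (Fin N) × ℝ => ψ bl (x, t)) := fun x t =>
    hψcont.comp (continuous_id.prodMk continuous_const)
  have hfcont : ∀ p : EuclideanSpace ℝ (Fin N), Continuous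
      (fun bl : EuclideanSpace ℝ (Fin N) × ℝ => -⟪bl.1, p⟫ - bl.2) := fun p =>
    ((continuous_fst.inner continuous_const).neg).sub continuous_snd
  have hgcont : ∀ (δ : ℝ) (x : EuclideanSpace ℝ (Fin N)) (t : ℝ)
      (p : EuclideanSpace ℝ (Fin N)), Continuous
      (fun bl : EuclideanSpace ℝ (Fin N) × ℝ =>
        -⟪bl.1, p⟫ - bl.2 - δ⁻¹ * ψ bl (x, t)) := fun δ x t p =>
    (hfcont p).sub (continuous_const.mul (hψcont' x t))
  have hbddS : ∀ (δ : ℝ) (x : EuclideanSpace ℝ (Fin N)) (t : ℝ)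
      (p : EuclideanSpace ℝ (Fin N)), BddAbove
      ((fun bl : EuclideanSpace ℝ (Fin N) × ℝ =>
        -⟪bl.1, p⟫ - bl.2 - δ⁻¹ * ψ bl (x, t)) '' S) := fun δ x t p =>
    (hScomp.image (hgcont δ x t p)).bddAbove
  have hbddF : ∀ (x : EuclideanSpace ℝ (Fin N)) (t : ℝ)
      (p : EuclideanSpace ℝ (Fin N)), BddAbove
      ((fun bl : EuclideanSpace ℝ (Fin N) × ℝ => -⟪bl.1, p⟫ - bl.2) '' F (x, t)) :=
    fun x t p => ((hcomp (x, t)).image (hfcont p)).bddAbove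
  -- Part 1 : H ≤ Hδ
  have part1 : ∀ δ > (0:ℝ), ∀ x t p, H x t p ≤ Hδ δ x t p := by
    intro δ hδ x t p
    rw [hH, hHδ]
    apply csSup_le ((hne (x, t)).image _)
    rintro y ⟨bl, hbl, rfl⟩
    have h0 : ψ bl (x, t) = 0 := (hψzero bl (x, t)).mpr hbl
    have heq : -⟪bl.1, p⟫ - bl.2 = -⟪bl.1, p⟫ - bl.2 - δ⁻¹ * ψ bl (x, t) := by
      rw [h0]; ring
    exact le_trans (le_of_eq heq) (le_csSup (hbddS δ x t p) ⟨bl, hFS _ hbl, rfl⟩)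
  -- Key Lipschitz estimate
  have hkey : ∀ δ : ℝ, 0 < δ →
      ∀ q q' : (EuclideanSpace ℝ (Fin N) × ℝ) × EuclideanSpace ℝ (Fin N),
      Hδ δ q.1.1 q.1.2 q.2 ≤ Hδ δ q'.1.1 q'.1.2 q'.2 +
        (M + δ⁻¹ * Lψ) * dist q q' := by
    intro δ hδ q q'
    obtain ⟨⟨x, t⟩, p⟩ := q
    obtain ⟨⟨x', t'⟩, p'⟩ := q'
    rw [hHδ, hHδ]
    apply csSup_le (hSne.image _)
    rintro y ⟨bl, hbl, rfl⟩
    have hd : dist (((x, t)), p) (((x', t')), p') = dist ((x, t), p) ((x', t'), p') := rfl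
    set d : ℝ := dist (((x, t), p) : (EuclideanSpace ℝ (Fin N) × ℝ) × EuclideanSpace ℝ (Fin N)) ((x', t'), p') with hddef
    have hdnn0 : (0:ℝ) ≤ d := dist_nonneg
    clear_value d
    have hdp : dist p p' ≤ d := by
      rw [hddef, Prod.dist_eq]; exact le_max_right _ _
    have hdxt : dist (x, t) (x', t') ≤ d := by
      rw [hddef, Prod.dist_eq]; exact le_max_left _ _
    have hdnn : (0:ℝ) ≤ d := hdnn0
    -- inner product estimate
    have hip : -⟪bl.1, p⟫ ≤ -⟪bl.1, p'⟫ + M * d := by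
      have h1 : |⟪bl.1, p' - p⟫| ≤ ‖bl.1‖ * ‖p' - p‖ := abs_real_inner_le_norm _ _
      have h2 : ‖bl.1‖ * ‖p' - p‖ ≤ M * d := by
        have hnp : ‖p' - p‖ = dist p p' := by rw [dist_comm]; exact (dist_eq_norm p' p).symm
        have : ‖p' - p‖ ≤ d := hnp ▸ hdp
        exact mul_le_mul hbl.1 this (norm_nonneg _) hM.le
      have h3 : ⟪bl.1, p' - p⟫ = ⟪bl.1, p'⟫ - ⟪bl.1, p⟫ := inner_sub_right _ _ _
      have h5 := (abs_le.mp (h1.trans h2)).2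
      rw [h3] at h5
      linarith
    -- ψ estimate
    have hψd : ψ bl (x', t') - ψ bl (x, t) ≤ ↑Lψ * d := by
      have h1 := hψlip.dist_le_mul (bl, (x, t)) (bl, (x', t'))
      simp only at h1
      have h2 : dist ((bl, (x, t)) : (EuclideanSpace ℝ (Fin N) × ℝ) × (EuclideanSpace ℝ (Fin N) × ℝ)) (bl, (x', t')) = dist (x, t) (x', t') := by
        simp [Prod.dist_eq, dist_nonneg]
      rw [h2, Real.dist_eq] at h1
      have h3 : ↑Lψ * dist (x, t) (x', t') ≤ ↑Lψ * d :=
        mul_le_mul_of_nonneg_left hdxt Lψ.coe_nonneg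
      have h4 : ψ bl (x', t') - ψ bl (x, t) ≤ |ψ bl (x, t) - ψ bl (x', t')| := by
        rw [abs_sub_comm]; exact le_abs_self _
      linarith
    have hδinv : (0:ℝ) ≤ δ⁻¹ := inv_nonneg.mpr hδ.le
    have hψd' : δ⁻¹ * ψ bl (x', t') - δ⁻¹ * ψ bl (x, t) ≤ δ⁻¹ * (↑Lψ * d) := by
      have h := mul_le_mul_of_nonneg_left hψd hδinv
      nlinarith [h]
    have hle : -⟪bl.1, p⟫ - bl.2 - δ⁻¹ * ψ bl (x, t) ≤
        (-⟪bl.1, p'⟫ - bl.2 - δ⁻¹ * ψ bl (x', t')) + (M + δ⁻¹ * ↑Lψ) * d := by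
      nlinarith [hψd', hip]
    refine hle.trans ?_
    have := le_csSup (hbddS δ x' t' p') ⟨bl, hbl, rfl⟩
    linarith
  -- Part 2 : Lipschitz
  have part2 : ∀ δ > (0:ℝ), ∀ R > (0:ℝ), ∃ C : NNReal, LipschitzOnWith C
      (fun q : (EuclideanSpace ℝ (Fin N) × ℝ) × EuclideanSpace ℝ (Fin N) =>
        Hδ δ q.1.1 q.1.2 q.2)
      (Set.univ ×ˢ Metric.closedBall 0 R) := by
    intro δ hδ R _
    have hCnn : (0:ℝ) ≤ M + δ⁻¹ * ↑Lψ :=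
      add_nonneg hM.le (mul_nonneg (inv_nonneg.mpr hδ.le) Lψ.coe_nonneg)
    refine ⟨(M + δ⁻¹ * ↑Lψ).toNNReal, ?_⟩
    rw [lipschitzOnWith_iff_dist_le_mul]
    intro q _ q' _
    rw [Real.dist_eq, Real.coe_toNNReal _ hCnn]
    rw [abs_sub_le_iff]
    constructor
    · linarith [hkey δ hδ q q']
    · have := hkey δ hδ q' q
      rw [dist_comm] at this
      linarith
  refine ⟨part1, part2, ?_⟩
  intro x t p
  constructor
  · -- monotone in δ
    intro δ₁ δ₂ h1 h12
    rw [hHδ, hHδ]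
    apply csSup_le (hSne.image _)
    rintro y ⟨bl, hbl, rfl⟩
    have hinv : δ₂⁻¹ ≤ δ₁⁻¹ := inv_anti₀ h1 h12
    have : δ₂⁻¹ * ψ bl (x, t) ≤ δ₁⁻¹ * ψ bl (x, t) :=
      mul_le_mul_of_nonneg_right hinv (hψpos _ _)
    have hle : -⟪bl.1, p⟫ - bl.2 - δ₁⁻¹ * ψ bl (x, t) ≤
        -⟪bl.1, p⟫ - bl.2 - δ₂⁻¹ * ψ bl (x, t) := by linarith
    exact hle.trans (le_csSup (hbddS δ₂ x t p) ⟨bl, hbl, rfl⟩)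
  · -- convergence as δ ↓ 0
    have hfH : ∀ bl ∈ F (x, t), -⟪bl.1, p⟫ - bl.2 ≤ H x t p := by
      intro bl hbl
      rw [hH]
      exact le_csSup (hbddF x t p) ⟨bl, hbl, rfl⟩
    have hfB : ∀ bl ∈ S, -⟪bl.1, p⟫ - bl.2 ≤ M * ‖p‖ + M := by
      intro bl hbl
      have h1 : |⟪bl.1, p⟫| ≤ ‖bl.1‖ * ‖p‖ := abs_real_inner_le_norm _ _
      have h2 := neg_abs_le ⟪bl.1, p⟫
      have h3 := neg_abs_le bl.2
      have h4 : ‖bl.1‖ * ‖p‖ ≤ M * ‖p‖ :=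
        mul_le_mul_of_nonneg_right hbl.1 (norm_nonneg p)
      linarith [hbl.2]
    rw [Metric.tendsto_nhdsWithin_nhds]
    intro ε hε
    obtain ⟨c, hc, hclaim⟩ : ∃ c > (0:ℝ), ∀ bl ∈ S, ψ bl (x, t) ≤ c →
        -⟪bl.1, p⟫ - bl.2 ≤ H x t p + ε / 2 := by
      by_contra hcon
      push_neg at hcon
      have hseq : ∀ n : ℕ, ∃ bl, bl ∈ S ∧ ψ bl (x, t) ≤ ((n : ℝ) + 1)⁻¹ ∧
          H x t p + ε / 2 < -⟪bl.1, p⟫ - bl.2 := by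
        intro n
        obtain ⟨bl, hbl1, hbl2, hbl3⟩ := hcon (((n : ℝ) + 1)⁻¹) (by positivity)
        exact ⟨bl, hbl1, hbl2, hbl3⟩
      choose u hu1 hu2 hu3 using hseq
      obtain ⟨a, haS, φ, hφ, hφt⟩ := hScomp.tendsto_subseq hu1
      have hψtend : Filter.Tendsto (fun n => ψ (u (φ n)) (x, t)) Filter.atTop
          (nhds (ψ a (x, t))) := ((hψcont' x t).tendsto a).comp hφt
      have h0tend : Filter.Tendsto (fun n : ℕ => ((φ n : ℝ) + 1)⁻¹) Filter.atTop
          (nhds 0) := by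
        have h1 : Filter.Tendsto (fun n : ℕ => ((n : ℝ) + 1)⁻¹) Filter.atTop (nhds 0) := by
          simpa [one_div] using tendsto_one_div_add_atTop_nhds_zero_nat (𝕜 := ℝ)
        exact h1.comp hφ.tendsto_atTop
      have hψa0 : ψ a (x, t) ≤ 0 :=
        le_of_tendsto_of_tendsto' hψtend h0tend (fun n => hu2 (φ n))
      have hψa : ψ a (x, t) = 0 := le_antisymm hψa0 (hψpos _ _)
      have haF : a ∈ F (x, t) := (hψzero a (x, t)).mp hψa
      have hftend : Filter.Tendsto (fun n => -⟪(u (φ n)).1, p⟫ - (u (φ n)).2)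
          Filter.atTop (nhds (-⟪a.1, p⟫ - a.2)) := ((hfcont p).tendsto a).comp hφt
      have hge : H x t p + ε / 2 ≤ -⟪a.1, p⟫ - a.2 :=
        ge_of_tendsto' hftend (fun n => (hu3 (φ n)).le) |>.trans_eq rfl
      have := hfH a haF
      linarith
    set B : ℝ := M * ‖p‖ + M with hBdef
    set A : ℝ := |B - H x t p - ε / 2| + 1 with hAdef
    have hA : (0:ℝ) < A := by positivity
    refine ⟨c / A, by positivity, ?_⟩
    intro δ hδmem hδdist
    have hδ : (0:ℝ) < δ := hδmem
    have hδlt : δ < c / A := by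
      rwa [Real.dist_eq, sub_zero, abs_of_pos hδ] at hδdist
    have hδA : δ * A < c := (lt_div_iff₀ hA).mp hδlt
    have hinvA : A < δ⁻¹ * c := by
      have h1 : δ⁻¹ * (δ * A) < δ⁻¹ * c :=
        mul_lt_mul_of_pos_left hδA (inv_pos.mpr hδ)
      have h2 : δ⁻¹ * (δ * A) = A := by field_simp
      linarith
    have hBA : B - H x t p - ε / 2 ≤ A := by
      have := le_abs_self (B - H x t p - ε / 2)
      rw [hAdef]; linarith
    have hkey2 : B - δ⁻¹ * c ≤ H x t p + ε / 2 := by linarith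
    have hub : Hδ δ x t p ≤ H x t p + ε / 2 := by
      rw [hHδ]
      apply csSup_le (hSne.image _)
      rintro y ⟨bl, hbl, rfl⟩
      by_cases hψc : ψ bl (x, t) ≤ c
      · have h1 := hclaim bl hbl hψc
        have hnn : 0 ≤ δ⁻¹ * ψ bl (x, t) :=
          mul_nonneg (inv_nonneg.mpr hδ.le) (hψpos _ _)
        linarith
      · push_neg at hψc
        have h1 : δ⁻¹ * c ≤ δ⁻¹ * ψ bl (x, t) :=
          mul_le_mul_of_nonneg_left hψc.le (inv_nonneg.mpr hδ.le)
        have h2 := hfB bl hbl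
        linarith
    have hlow := part1 δ hδ x t p
    rw [Real.dist_eq, abs_of_nonneg (by linarith)]
    linarith
end
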